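/- Let f ∈ Homeo^+(S^1) be hyperbolic with fixed points f_+, f_-, and let g ∈ Homeo^+(S^1) be such that g does not exchange the fixed points of f (i.e., not both g(f_+) = f_- and g(f_-) = f_+). Then for all sufficiently large N, either f^N ∘ g has a fixed point or f^{-N} ∘ g has a fixed point. -/
import Mathlib


open Filter Topology Set Function

private lemma fixed_of_iterate_tendsto (h : AddCircle (1 : ℝ) ≃ₜ AddCircle (1 : ℝ))
    (x L : AddCircle (1 : ℝ))
    (hT : Tendsto (fun n : ℕ => (⇑h)^[n] x) atTop (𝓝 L)) : h L = L := by
  have h1 : Tendsto (fun n : ℕ => (⇑h)^[n + 1] x) atTop (𝓝 L) :=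
    hT.comp (tendsto_add_atTop_nat 1)
  have h2 : Tendsto (fun n : ℕ => h ((⇑h)^[n] x)) atTop (𝓝 (h L)) :=
    (h.continuous.tendsto L).comp hT
  simp only [Function.iterate_succ_apply'] at h1
  exact tendsto_nhds_unique h2 h1

private lemma key_fixed_point (F g : AddCircle (1 : ℝ) ≃ₜ AddCircle (1 : ℝ))
    (q r : AddCircle (1 : ℝ)) (hqr : q ≠ r) (hFr : F r = r)
    (hattr : ∀ x, x ≠ r → Tendsto (fun n : ℕ => (⇑F)^[n] x) atTop (𝓝 q))
    (hgq : g q ≠ r) :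
    ∃ N₀ : ℕ, ∀ N ≥ N₀, ∃ x, (⇑F)^[N] (g x) = x := by
  haveI : Fact ((0 : ℝ) < 1) := ⟨zero_lt_one⟩
  obtain ⟨ρ, hρ⟩ : ∃ t : ℝ, (t : AddCircle (1 : ℝ)) = r := Quotient.exists_rep r
  have hcπ : Continuous (fun t : ℝ => (t : AddCircle (1 : ℝ))) := continuous_quotient_mk'
  set lift : AddCircle (1 : ℝ) → ℝ := fun x => (AddCircle.equivIco 1 ρ x : ℝ) with hlift_def
  have hmem : ∀ x, lift x ∈ Ico ρ (ρ + 1) := fun x => (AddCircle.equivIco 1 ρ x).2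
  have hπl : ∀ x : AddCircle (1 : ℝ), ((lift x : ℝ) : AddCircle (1 : ℝ)) = x := fun x =>
    (AddCircle.equivIco 1 ρ).symm_apply_apply x
  have hinj : ∀ t₁ ∈ Ico ρ (ρ + 1), ∀ t₂ ∈ Ico ρ (ρ + 1),
      (t₁ : AddCircle (1 : ℝ)) = (t₂ : ℝ) → t₁ = t₂ := fun t₁ h₁ t₂ h₂ h =>
    (AddCircle.coe_eq_coe_iff_of_mem_Ico h₁ h₂).mp h
  have hlπ : ∀ t ∈ Ico ρ (ρ + 1), lift ↑t = t := fun t ht =>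
    hinj _ (hmem _) _ ht (hπl ↑t)
  have hρmem : ρ ∈ Ico ρ (ρ + 1) := ⟨le_refl _, by linarith⟩
  have hne : ∀ t ∈ Ioo ρ (ρ + 1), (t : AddCircle (1 : ℝ)) ≠ r := by
    intro t ht h
    have := hinj t (Ioo_subset_Ico_self ht) ρ hρmem (h.trans hρ.symm)
    exact ht.1.ne' this
  have hlift_Ioo : ∀ x, x ≠ r → lift x ∈ Ioo ρ (ρ + 1) := by
    intro x hx
    rcases hmem x with ⟨h1, h2⟩
    rcases h1.lt_or_eq with h | h
    · exact ⟨h, h2⟩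
    · exact absurd (by rw [← hπl x, ← h]; exact hρ) hx
  have hlift_cont : ∀ x, x ≠ r → ContinuousAt lift x := by
    intro x hx
    have hx' : x ≠ (↑ρ : AddCircle (1 : ℝ)) := by rw [hρ]; exact hx
    exact continuous_subtype_val.continuousAt.comp (AddCircle.continuousAt_equivIco 1 ρ hx')
  set Ft : ℝ → ℝ := fun t => lift (F ↑t) with hFt_def
  set G : ℝ → ℝ := fun t => lift (g ↑t) with hG_def
  have hFne : ∀ t ∈ Ioo ρ (ρ + 1), F ↑t ≠ r := by
    intro t ht h
    exact hne t ht (F.injective (h.trans hFr.symm))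
  have hFmaps : ∀ t ∈ Ioo ρ (ρ + 1), Ft t ∈ Ioo ρ (ρ + 1) := fun t ht =>
    hlift_Ioo _ (hFne t ht)
  have hFt_cont : ContinuousOn Ft (Ioo ρ (ρ + 1)) := by
    intro t ht
    have h2 : ContinuousAt (fun t : ℝ => F ↑t) t :=
      F.continuous.continuousAt.comp hcπ.continuousAt
    have h3 := Filter.Tendsto.comp (hlift_cont _ (hFne t ht)) h2
    exact ContinuousAt.continuousWithinAt h3
  have hFt_inj : InjOn Ft (Ioo ρ (ρ + 1)) := by
    intro t₁ h₁ t₂ h₂ h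
    have h' : F ↑t₁ = F ↑t₂ := by
      rw [← hπl (F ↑t₁), ← hπl (F ↑t₂)]
      exact congrArg _ h
    exact hinj _ (Ioo_subset_Ico_self h₁) _ (Ioo_subset_Ico_self h₂) (F.injective h')
  have hρ1 : ρ < ρ + 1 := by linarith
  have hmono := ContinuousOn.strictMonoOn_of_injOn_Ioo hρ1 hFt_cont hFt_inj
  have hstep : ∀ t₁ ∈ Ioo ρ (ρ + 1), ∀ t₂ ∈ Ioo ρ (ρ + 1), ∀ t ∈ Ioo ρ (ρ + 1),
      t ∈ uIcc t₁ t₂ → Ft t ∈ uIcc (Ft t₁) (Ft t₂) := by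
    intro t₁ h₁ t₂ h₂ t ht hm
    rcases hmono with M | M
    · rcases le_total t₁ t₂ with h | h
      · rw [uIcc_of_le h] at hm
        exact Icc_subset_uIcc ⟨M.monotoneOn h₁ ht hm.1, M.monotoneOn ht h₂ hm.2⟩
      · rw [uIcc_of_ge h] at hm
        exact Icc_subset_uIcc' ⟨M.monotoneOn h₂ ht hm.1, M.monotoneOn ht h₁ hm.2⟩
    · rcases le_total t₁ t₂ with h | h
      · rw [uIcc_of_le h] at hm
        exact Icc_subset_uIcc' ⟨M.antitoneOn ht h₂ hm.2, M.antitoneOn h₁ ht hm.1⟩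
      · rw [uIcc_of_ge h] at hm
        exact Icc_subset_uIcc ⟨M.antitoneOn ht h₁ hm.2, M.antitoneOn h₂ ht hm.1⟩
  have hiter : ∀ n : ℕ, ∀ t ∈ Ioo ρ (ρ + 1), Ft^[n] t ∈ Ioo ρ (ρ + 1) ∧
      ((Ft^[n] t : ℝ) : AddCircle (1 : ℝ)) = (⇑F)^[n] ↑t := by
    intro n
    induction n with
    | zero => exact fun t ht => ⟨ht, rfl⟩
    | succ n ih =>
      intro t ht
      obtain ⟨hm, hco⟩ := ih t ht
      rw [Function.iterate_succ_apply', Function.iterate_succ_apply']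
      refine ⟨hFmaps _ hm, ?_⟩
      calc ((Ft (Ft^[n] t) : ℝ) : AddCircle (1 : ℝ)) = F ↑(Ft^[n] t) := hπl _
      _ = F ((⇑F)^[n] ↑t) := by rw [hco]
  have hiter_cont : ∀ n : ℕ, ContinuousOn (Ft^[n]) (Ioo ρ (ρ + 1)) := by
    intro n
    induction n with
    | zero => exact continuousOn_id
    | succ n ih =>
      rw [Function.iterate_succ]
      exact ih.comp hFt_cont fun t ht => hFmaps t ht
  have hsand : ∀ n : ℕ, ∀ t₁ ∈ Ioo ρ (ρ + 1), ∀ t₂ ∈ Ioo ρ (ρ + 1), ∀ t ∈ Ioo ρ (ρ + 1),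
      t ∈ uIcc t₁ t₂ → Ft^[n] t ∈ uIcc (Ft^[n] t₁) (Ft^[n] t₂) := by
    intro n
    induction n with
    | zero => exact fun t₁ _ t₂ _ t _ h => h
    | succ n ih =>
      intro t₁ h₁ t₂ h₂ t ht h
      rw [Function.iterate_succ_apply', Function.iterate_succ_apply',
        Function.iterate_succ_apply']
      exact hstep _ (hiter n t₁ h₁).1 _ (hiter n t₂ h₂).1 _ (hiter n t ht).1
        (ih t₁ h₁ t₂ h₂ t ht h)
  -- choose interval around the lift of q
  set qt : ℝ := lift q with hqt
  have hqmem : qt ∈ Ioo ρ (ρ + 1) := hlift_Ioo q hqr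
  have hπq : ((qt : ℝ) : AddCircle (1 : ℝ)) = q := hπl q
  set U : Set ℝ := Ioo ρ (ρ + 1) ∩ {t : ℝ | g ↑t ≠ r} with hU_def
  have hUopen : IsOpen U :=
    isOpen_Ioo.inter (isOpen_compl_singleton.preimage (g.continuous.comp hcπ))
  have hqU : qt ∈ U := ⟨hqmem, by show g ↑qt ≠ r; rw [hπq]; exact hgq⟩
  obtain ⟨ε, hε, hball⟩ := Metric.nhds_basis_closedBall.mem_iff.mp (hUopen.mem_nhds hqU)
  set c : ℝ := qt - ε with hc
  set d : ℝ := qt + ε with hd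
  have hIccU : Icc c d ⊆ U := by
    rw [hc, hd, ← Real.closedBall_eq_Icc]
    exact hball
  have hcd : c < d := by rw [hc, hd]; linarith
  have hGmem : ∀ t ∈ Icc c d, G t ∈ Ioo ρ (ρ + 1) := fun t ht => hlift_Ioo _ (hIccU ht).2
  have hGcont : ContinuousOn G (Icc c d) := by
    intro t ht
    have h2 : ContinuousAt (fun t : ℝ => g ↑t) t :=
      g.continuous.continuousAt.comp hcπ.continuousAt
    have h3 := Filter.Tendsto.comp (hlift_cont _ (hIccU ht).2) h2
    exact ContinuousAt.continuousWithinAt h3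
  obtain ⟨ta, hta, hmin⟩ := isCompact_Icc.exists_isMinOn (nonempty_Icc.mpr hcd.le) hGcont
  obtain ⟨tb, htb, hmax⟩ := isCompact_Icc.exists_isMaxOn (nonempty_Icc.mpr hcd.le) hGcont
  set a : ℝ := G ta with ha_def
  set b : ℝ := G tb with hb_def
  have hab : a ≤ b := hmin htb
  have haI : a ∈ Ioo ρ (ρ + 1) := hGmem ta hta
  have hbI : b ∈ Ioo ρ (ρ + 1) := hGmem tb htb
  have hGuIcc : ∀ t ∈ Icc c d, G t ∈ uIcc a b := by
    intro t ht
    rw [uIcc_of_le hab]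
    exact ⟨hmin ht, hmax ht⟩
  have hconv : ∀ t ∈ Ioo ρ (ρ + 1), Tendsto (fun n : ℕ => Ft^[n] t) atTop (𝓝 qt) := by
    intro t ht
    have h1 : Tendsto (fun n : ℕ => (⇑F)^[n] (↑t : AddCircle (1 : ℝ))) atTop (𝓝 q) :=
      hattr _ (hne t ht)
    have h2 : Tendsto (fun n : ℕ => lift ((⇑F)^[n] (↑t : AddCircle (1 : ℝ)))) atTop
        (𝓝 (lift q)) := (hlift_cont q hqr).tendsto.comp h1
    have heq : (fun n : ℕ => lift ((⇑F)^[n] (↑t : AddCircle (1 : ℝ)))) =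
        fun n => Ft^[n] t := by
      funext n
      rw [← (hiter n t ht).2, hlπ _ (Ioo_subset_Ico_self (hiter n t ht).1)]
    rwa [heq] at h2
  have hIccnhds : Icc c d ∈ 𝓝 qt :=
    Icc_mem_nhds (by rw [hc]; linarith) (by rw [hd]; linarith)
  have hA : ∀ᶠ n in atTop, Ft^[n] a ∈ Icc c d := (hconv a haI).eventually_mem hIccnhds
  have hB : ∀ᶠ n in atTop, Ft^[n] b ∈ Icc c d := (hconv b hbI).eventually_mem hIccnhds
  obtain ⟨N₀, hN₀⟩ := eventually_atTop.mp (hA.and hB)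
  refine ⟨N₀, fun N hN => ?_⟩
  obtain ⟨hNa, hNb⟩ := hN₀ N hN
  have hmapsto : ∀ t ∈ Icc c d, Ft^[N] (G t) ∈ Icc c d := by
    intro t ht
    have h1 : Ft^[N] (G t) ∈ uIcc (Ft^[N] a) (Ft^[N] b) :=
      hsand N a haI b hbI (G t) (hGmem t ht) (hGuIcc t ht)
    exact ordConnected_Icc.uIcc_subset hNa hNb h1
  have hψcont : ContinuousOn (fun t => Ft^[N] (G t)) (Icc c d) :=
    (hiter_cont N).comp hGcont fun t ht => hGmem t ht
  have hivt : ∃ t₀ ∈ Icc c d, Ft^[N] (G t₀) = t₀ := by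
    have hψc : ContinuousOn (fun t => Ft^[N] (G t) - t) (Icc c d) :=
      hψcont.sub continuousOn_id
    have hd0 : Ft^[N] (G d) - d ≤ 0 := by
      have := (hmapsto d (right_mem_Icc.mpr hcd.le)).2
      linarith
    have hc0 : 0 ≤ Ft^[N] (G c) - c := by
      have := (hmapsto c (left_mem_Icc.mpr hcd.le)).1
      linarith
    have h0 : (0 : ℝ) ∈ Icc (Ft^[N] (G d) - d) (Ft^[N] (G c) - c) := ⟨hd0, hc0⟩
    obtain ⟨t₀, ht₀, hzero⟩ := intermediate_value_Icc' hcd.le hψc h0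
    exact ⟨t₀, ht₀, by linarith [show Ft^[N] (G t₀) - t₀ = 0 from hzero]⟩
  obtain ⟨t₀, ht₀, hfix⟩ := hivt
  refine ⟨(↑t₀ : AddCircle (1 : ℝ)), ?_⟩
  calc (⇑F)^[N] (g ↑t₀) = (⇑F)^[N] ((G t₀ : ℝ) : AddCircle (1 : ℝ)) := by rw [hπl]
  _ = ((Ft^[N] (G t₀) : ℝ) : AddCircle (1 : ℝ)) := ((hiter N (G t₀) (hGmem t₀ ht₀)).2).symm
  _ = ↑t₀ := by rw [hfix]

/-- if `f` is hyperbolic with fixed points `p` (attracting) and `m` (repelling),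
and `g` does not exchange the fixed points of `f`, then for all sufficiently large `N`,
either `f^N ∘ g` or `f^{-N} ∘ g` has a fixed point. -/
theorem hyperbolic_power_comp_has_fixed_point
    (f g : AddCircle (1 : ℝ) ≃ₜ AddCircle (1 : ℝ))
    (p m : AddCircle (1 : ℝ)) (hpm : p ≠ m)
    (hattr : ∀ x, x ≠ m → Tendsto (fun n : ℕ => (⇑f)^[n] x) atTop (𝓝 p))
    (hrep : ∀ x, x ≠ p → Tendsto (fun n : ℕ => (⇑f.symm)^[n] x) atTop (𝓝 m))
    (hg : ¬(g p = m ∧ g m = p)) :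
    ∃ N₀ : ℕ, ∀ N ≥ N₀,
      (∃ x, (⇑f)^[N] (g x) = x) ∨ (∃ x, (⇑f.symm)^[N] (g x) = x) := by
  have hfp : f p = p := fixed_of_iterate_tendsto f p p (hattr p hpm)
  have hfsm : f.symm m = m := fixed_of_iterate_tendsto f.symm m m (hrep m hpm.symm)
  have hfm : f m = m := by
    have := (f.symm_apply_eq).mp hfsm
    exact this.symm
  have hfsp : f.symm p = p := (f.symm_apply_eq).mpr hfp.symm
  by_cases h1 : g p = m
  · have h2 : g m ≠ p := fun h => hg ⟨h1, h⟩
    obtain ⟨N₀, h⟩ := key_fixed_point f.symm g m p hpm.symm hfsp hrep h2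
    exact ⟨N₀, fun N hN => Or.inr (h N hN)⟩
  · obtain ⟨N₀, h⟩ := key_fixed_point f g p m hpm hfm hattr h1
    exact ⟨N₀, fun N hN => Or.inl (h N hN)⟩
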